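/- Let μ be a full-support distribution on {0,1}. For every q ∈ (0,1) and every η ∈ (0,1/2), ζ > 0 there exists M ∈ ℕ such that the following holds for all n: let ν be the distribution on {0,1,*} given by ν(*) = q and ν(c) = (1−q)μ(c) for c ∈ {0,1}. If f = χ_{S,b} for some S ⊆ [n] with |S| ≥ M and b ∈ {0,1}, then Pr_{ρ ~ ν^n}[ η < E_{μ}[f|_ρ] < 1 − η ] ≥ 1 − ζ. -/

import Mathlib

open Finset

attribute [local instance 10] Classical.propDecidable

noncomputable section

/-- The real value of a bit. -/
def bval (b : Bool) : ℝ := if b then 1 else 0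

/-- The XOR `⊕_{i ∈ S} x_i`. -/
def parity {k : ℕ} (S : Finset (Fin k)) (x : Fin k → Bool) : Bool :=
  decide ((S.filter fun i => x i = true).card % 2 = 1)

/-- The (possibly negated) character `χ_{S,b}(x) = b ⊕ ⊕_{i ∈ S} x_i`. -/
def chi {k : ℕ} (S : Finset (Fin k)) (b : Bool) (x : Fin k → Bool) : Bool :=
  xor b (parity S x)

/-- The expectation of `f` when the coordinates fixed by the restriction `ρ` are set
accordingly and the free coordinates are drawn i.i.d. from `ν`. -/
def condExp {n : ℕ} (ν : Bool → ℝ) (ρ : Fin n → Option Bool) (f : (Fin n → Bool) → ℝ) : ℝ :=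
  ∑ y : Fin n → Bool,
    (∏ i, (ρ i).elim (ν (y i)) (fun _ => if y i = false then (1 : ℝ) else 0)) *
    f (fun i => (ρ i).getD (y i))


/-- The sign `(-1)^c` of a bit. -/
def sg (c : Bool) : ℝ := if c then -1 else 1

lemma bval_eq (c : Bool) : bval c = (1 - sg c) / 2 := by
  cases c <;> simp [bval, sg]

lemma sg_xor (a b : Bool) : sg (xor a b) = sg a * sg b := by
  cases a <;> cases b <;> simp [sg]

lemma abs_sg (c : Bool) : |sg c| = 1 := by cases c <;> simp [sg]

lemma sg_parity {k : ℕ} (S : Finset (Fin k)) (x : Fin k → Bool) :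
    sg (parity S x) = ∏ i ∈ S, sg (x i) := by
  have h : ∏ i ∈ S, sg (x i) = (-1 : ℝ) ^ (S.filter fun i => x i = true).card := by
    rw [show (fun i => sg (x i)) = fun i => if x i = true then (-1 : ℝ) else 1 by
      funext i; cases x i <;> simp [sg]]
    rw [Finset.prod_ite, Finset.prod_const, Finset.prod_const, one_pow, mul_one]
  rw [h, parity]
  rcases Nat.even_or_odd ((S.filter fun i => x i = true).card) with he | ho
  · rw [he.neg_one_pow]
    simp [sg, Nat.even_iff.mp he]
  · rw [ho.neg_one_pow]
    simp [sg, Nat.odd_iff.mp ho]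

lemma sum_fun_prod {n : ℕ} {α : Type*} [Fintype α] (g : Fin n → α → ℝ) :
    ∑ y : Fin n → α, ∏ i, g i (y i) = ∏ i, ∑ a, g i a := by
  classical
  rw [Finset.prod_univ_sum]
  rw [Fintype.piFinset_univ]

lemma condExp_chi {n : ℕ} (μ : Bool → ℝ) (hsum : ∑ c, μ c = 1)
    (ρ : Fin n → Option Bool) (S : Finset (Fin n)) (b : Bool) :
    condExp μ ρ (fun x => bval (chi S b x)) =
      1 / 2 - sg b / 2 * ∏ i ∈ S, ((ρ i).elim (μ false - μ true) sg) := by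
  have hsum' : μ true + μ false = 1 := by simpa [Fintype.sum_bool] using hsum
  have key : ∀ y : Fin n → Bool,
      (∏ i, (ρ i).elim (μ (y i)) (fun _ => if y i = false then (1 : ℝ) else 0)) *
        bval (chi S b (fun i => (ρ i).getD (y i)))
      = (1/2) * (∏ i, (ρ i).elim (μ (y i)) (fun _ => if y i = false then (1 : ℝ) else 0))
        - (sg b / 2) *
          ∏ i, ((ρ i).elim (μ (y i)) (fun _ => if y i = false then (1 : ℝ) else 0) *
            (if i ∈ S then sg ((ρ i).getD (y i)) else 1)) := by
    intro y
    rw [bval_eq, chi, sg_xor, sg_parity]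
    rw [Finset.prod_mul_distrib, Finset.prod_ite_mem, Finset.univ_inter]
    ring
  rw [condExp]
  simp only [key]
  rw [Finset.sum_sub_distrib, ← Finset.mul_sum, ← Finset.mul_sum]
  rw [sum_fun_prod (fun i a => (ρ i).elim (μ a) (fun _ => if a = false then (1:ℝ) else 0)),
    sum_fun_prod (fun i a => (ρ i).elim (μ a) (fun _ => if a = false then (1:ℝ) else 0) *
      (if i ∈ S then sg ((ρ i).getD a) else 1))]
  have h1 : ∀ i : Fin n,
      ∑ a : Bool, (ρ i).elim (μ a) (fun _ => if a = false then (1:ℝ) else 0) = 1 := by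
    intro i
    cases hρ : ρ i <;> simp [Fintype.sum_bool, hsum', add_comm]
  have h2 : ∀ i : Fin n,
      (∑ a : Bool, (ρ i).elim (μ a) (fun _ => if a = false then (1:ℝ) else 0) *
        (if i ∈ S then sg ((ρ i).getD a) else 1))
      = if i ∈ S then (ρ i).elim (μ false - μ true) sg else 1 := by
    intro i
    by_cases hi : i ∈ S <;> cases hρ : ρ i <;>
      simp [hi, Fintype.sum_bool, sg, hsum', add_comm] <;> ring
  simp only [h1, h2]
  rw [Finset.prod_const_one, Finset.prod_ite_mem, Finset.univ_inter]
  ring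

lemma abs_prod_restrict {n : ℕ} (ε : ℝ) (ρ : Fin n → Option Bool) (S : Finset (Fin n)) :
    |∏ i ∈ S, (ρ i).elim ε sg| = |ε| ^ (S.filter fun i => ρ i = none).card := by
  rw [Finset.abs_prod]
  rw [← Finset.prod_filter_mul_prod_filter_not S (fun i => ρ i = none)]
  have h1 : ∀ i ∈ S.filter (fun i => ρ i = none), |(ρ i).elim ε sg| = |ε| := by
    intro i hi
    rw [Finset.mem_filter] at hi
    rw [hi.2]; rfl
  have h2 : ∀ i ∈ S.filter (fun i => ¬ ρ i = none), |(ρ i).elim ε sg| = 1 := by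
    intro i hi
    rw [Finset.mem_filter] at hi
    rcases Option.ne_none_iff_exists'.mp hi.2 with ⟨c, hc⟩
    rw [hc]; exact abs_sg c
  rw [Finset.prod_congr rfl h1, Finset.prod_congr rfl h2, Finset.prod_const,
    Finset.prod_const, one_pow, mul_one]

lemma total_mass {n : ℕ} (μ : Bool → ℝ) (hsum : ∑ c, μ c = 1) (q : ℝ) :
    ∑ ρ : Fin n → Option Bool, (∏ i, (ρ i).elim q (fun c => (1 - q) * μ c)) = 1 := by
  have hsum' : μ true + μ false = 1 := by simpa [Fintype.sum_bool] using hsum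
  have h := sum_fun_prod (fun (_ : Fin n) (o : Option Bool) => o.elim q (fun c => (1 - q) * μ c))
  rw [h]
  have h2 : (∑ a : Option Bool, a.elim q fun c => (1 - q) * μ c) = 1 := by
    rw [Fintype.sum_option]
    simp [Fintype.sum_bool]
    linear_combination (1 - q) * hsum'
  simp [h2]

lemma fixed_mass {n : ℕ} (μ : Bool → ℝ) (hsum : ∑ c, μ c = 1) (q : ℝ) (T : Finset (Fin n)) :
    ∑ ρ : Fin n → Option Bool, (∏ i, (ρ i).elim q (fun c => (1 - q) * μ c)) *
      (∏ i ∈ T, (if ρ i ≠ none then (1:ℝ) else 0)) = (1 - q) ^ T.card := by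
  have hsum' : μ true + μ false = 1 := by simpa [Fintype.sum_bool] using hsum
  have key : ∀ ρ : Fin n → Option Bool,
      (∏ i, (ρ i).elim q (fun c => (1 - q) * μ c)) *
      (∏ i ∈ T, (if ρ i ≠ none then (1:ℝ) else 0))
      = ∏ i, ((ρ i).elim q (fun c => (1 - q) * μ c) *
          (if i ∈ T then (if ρ i ≠ none then (1:ℝ) else 0) else 1)) := by
    intro ρ
    rw [Finset.prod_mul_distrib, Finset.prod_ite_mem, Finset.univ_inter]
  simp only [key]
  rw [sum_fun_prod (fun i o => o.elim q (fun c => (1 - q) * μ c) *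
      (if i ∈ T then (if o ≠ none then (1:ℝ) else 0) else 1))]
  have : ∀ i : Fin n, (∑ o : Option Bool, o.elim q (fun c => (1 - q) * μ c) *
      (if i ∈ T then (if o ≠ none then (1:ℝ) else 0) else 1))
      = if i ∈ T then (1 - q) else 1 := by
    intro i
    by_cases hi : i ∈ T <;>
      · rw [Fintype.sum_option]
        simp [Fintype.sum_bool, hi]
        linear_combination (1 - q) * hsum'
  simp only [this]
  rw [Finset.prod_ite_mem, Finset.univ_inter, Finset.prod_const]


/-- **Large characters are balanced.** -/
theorem large_characters_balanced
    (μ : Bool → ℝ) (hpos : ∀ c, 0 < μ c) (hsum : ∑ c, μ c = 1)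
    (q : ℝ) (hq0 : 0 < q) (hq1 : q < 1)
    (η ζ : ℝ) (hη0 : 0 < η) (hη : η < 1 / 2) (hζ : 0 < ζ) :
    ∃ M : ℕ, ∀ (n : ℕ) (S : Finset (Fin n)) (b : Bool), M ≤ S.card →
      1 - ζ ≤ ∑ ρ : Fin n → Option Bool,
        (∏ i, (ρ i).elim q (fun c => (1 - q) * μ c)) *
        (if η < condExp μ ρ (fun x => bval (chi S b x)) ∧
            condExp μ ρ (fun x => bval (chi S b x)) < 1 - η then 1 else 0) := by
  have hsum' : μ true + μ false = 1 := by simpa [Fintype.sum_bool] using hsum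
  have hεlt : |μ false - μ true| < 1 := by
    rw [abs_lt]
    constructor <;> nlinarith [hpos true, hpos false]
  obtain ⟨K₀, hK₀⟩ := exists_pow_lt_of_lt_one (show (0:ℝ) < 1 - 2*η by linarith) hεlt
  set K := K₀ + 1 with hKdef
  have hKpow : |μ false - μ true| ^ K < 1 - 2*η :=
    lt_of_le_of_lt (pow_le_pow_of_le_one (abs_nonneg _) hεlt.le (by omega)) hK₀
  set r := 1 - q with hrdef
  have hr0 : 0 < r := by simp [hrdef]; linarith
  have hr1 : r < 1 := by simp [hrdef]; linarith
  have htend := tendsto_pow_const_mul_const_pow_of_lt_one K₀ hr0.le hr1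
  have hc : 0 < ζ * r ^ K₀ := mul_pos hζ (pow_pos hr0 _)
  obtain ⟨M₀, hM₀⟩ := Filter.eventually_atTop.mp (htend.eventually_le_const hc)
  refine ⟨max M₀ K, ?_⟩
  intro n S b hM
  set s := S.card with hsdef
  have hsK : K ≤ s := le_trans (le_max_right _ _) hM
  have hsM₀ : M₀ ≤ s := le_trans (le_max_left _ _) hM
  set m := s - K₀ with hmdef
  -- weights are nonnegative
  have hW0 : ∀ ρ : Fin n → Option Bool, 0 ≤ ∏ i, (ρ i).elim q (fun c => (1 - q) * μ c) := by
    intro ρ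
    apply Finset.prod_nonneg
    intro i _
    cases ρ i with
    | none => exact hq0.le
    | some c => exact mul_nonneg (by linarith) (hpos c).le
  -- pointwise: many free coordinates ⇒ balanced
  have hcond : ∀ ρ : Fin n → Option Bool, K ≤ (S.filter fun i => ρ i = none).card →
      η < condExp μ ρ (fun x => bval (chi S b x)) ∧
        condExp μ ρ (fun x => bval (chi S b x)) < 1 - η := by
    intro ρ hk
    have he := condExp_chi μ hsum ρ S b
    have habs : |condExp μ ρ (fun x => bval (chi S b x)) - 1/2| < (1 - 2*η)/2 := by
      rw [he]
      have : 1 / 2 - sg b / 2 * ∏ i ∈ S, ((ρ i).elim (μ false - μ true) sg) - 1/2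
          = -(sg b / 2 * ∏ i ∈ S, ((ρ i).elim (μ false - μ true) sg)) := by ring
      rw [this, abs_neg, abs_mul, abs_div, abs_sg, abs_prod_restrict]
      have h1 : |μ false - μ true| ^ (S.filter fun i => ρ i = none).card ≤ |μ false - μ true| ^ K :=
        pow_le_pow_of_le_one (abs_nonneg _) hεlt.le hk
      rw [abs_two]
      calc 1 / 2 * |μ false - μ true| ^ (S.filter fun i => ρ i = none).card
          ≤ 1 / 2 * |μ false - μ true| ^ K := by linarith
        _ < (1 - 2*η)/2 := by linarith
    rw [abs_lt] at habs
    constructor <;> [linarith [habs.1]; linarith [habs.2]]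
  -- compare indicators
  have hstep1 : ∑ ρ : Fin n → Option Bool,
        (∏ i, (ρ i).elim q (fun c => (1 - q) * μ c)) *
        (if K ≤ (S.filter fun i => ρ i = none).card then (1:ℝ) else 0)
      ≤ ∑ ρ : Fin n → Option Bool,
        (∏ i, (ρ i).elim q (fun c => (1 - q) * μ c)) *
        (if η < condExp μ ρ (fun x => bval (chi S b x)) ∧
            condExp μ ρ (fun x => bval (chi S b x)) < 1 - η then 1 else 0) := by
    apply Finset.sum_le_sum
    intro ρ _
    apply mul_le_mul_of_nonneg_left _ (hW0 ρ)
    by_cases hk : K ≤ (S.filter fun i => ρ i = none).card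
    · simp [hk, hcond ρ hk]
    · simp [hk]
      positivity
  -- the bad event
  have hsplit : (∑ ρ : Fin n → Option Bool,
        (∏ i, (ρ i).elim q (fun c => (1 - q) * μ c)) *
        (if K ≤ (S.filter fun i => ρ i = none).card then (1:ℝ) else 0))
      + (∑ ρ : Fin n → Option Bool,
        (∏ i, (ρ i).elim q (fun c => (1 - q) * μ c)) *
        (if (S.filter fun i => ρ i = none).card < K then (1:ℝ) else 0)) = 1 := by
    rw [← Finset.sum_add_distrib]
    calc ∑ ρ : Fin n → Option Bool,
          ((∏ i, (ρ i).elim q (fun c => (1 - q) * μ c)) *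
            (if K ≤ (S.filter fun i => ρ i = none).card then (1:ℝ) else 0)
          + (∏ i, (ρ i).elim q (fun c => (1 - q) * μ c)) *
            (if (S.filter fun i => ρ i = none).card < K then (1:ℝ) else 0))
        = ∑ ρ : Fin n → Option Bool, (∏ i, (ρ i).elim q (fun c => (1 - q) * μ c)) := by
          apply Finset.sum_congr rfl
          intro ρ _
          by_cases hk : K ≤ (S.filter fun i => ρ i = none).card
          · simp [hk, Nat.not_lt.mpr hk]
          · simp [hk, Nat.lt_of_not_le hk]
      _ = 1 := total_mass (n := n) μ hsum q
  -- union bound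
  have hbad : ∑ ρ : Fin n → Option Bool,
        (∏ i, (ρ i).elim q (fun c => (1 - q) * μ c)) *
        (if (S.filter fun i => ρ i = none).card < K then (1:ℝ) else 0)
      ≤ ζ := by
    have hpt : ∀ ρ : Fin n → Option Bool,
        (if (S.filter fun i => ρ i = none).card < K then (1:ℝ) else 0)
        ≤ ∑ T ∈ S.powersetCard m, ∏ i ∈ T, (if ρ i ≠ none then (1:ℝ) else 0) := by
      intro ρ
      by_cases hk : (S.filter fun i => ρ i = none).card < K
      · rw [if_pos hk]
        set F := S.filter (fun i => ¬ ρ i = none) with hF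
        have hcards : F.card + (S.filter fun i => ρ i = none).card = s := by
          rw [hF, add_comm]
          exact Finset.card_filter_add_card_filter_not _
        have hmF : m ≤ F.card := by omega
        obtain ⟨T, hTF, hTcard⟩ := Finset.exists_subset_card_eq hmF
        have hTmem : T ∈ S.powersetCard m := by
          rw [Finset.mem_powersetCard]
          exact ⟨hTF.trans (Finset.filter_subset _ _), hTcard⟩
        have hTone : ∏ i ∈ T, (if ρ i ≠ none then (1:ℝ) else 0) = 1 := by
          apply Finset.prod_eq_one
          intro i hi
          have := Finset.mem_filter.mp (hTF hi)
          simp [this.2]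
        calc (1:ℝ) = ∏ i ∈ T, (if ρ i ≠ none then (1:ℝ) else 0) := hTone.symm
          _ ≤ ∑ T' ∈ S.powersetCard m, ∏ i ∈ T', (if ρ i ≠ none then (1:ℝ) else 0) := by
            apply Finset.single_le_sum _ hTmem
            intro T' _
            apply Finset.prod_nonneg
            intro i _
            positivity
      · rw [if_neg hk]
        apply Finset.sum_nonneg
        intro T' _
        apply Finset.prod_nonneg
        intro i _
        positivity
    calc ∑ ρ : Fin n → Option Bool,
          (∏ i, (ρ i).elim q (fun c => (1 - q) * μ c)) *
          (if (S.filter fun i => ρ i = none).card < K then (1:ℝ) else 0)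
        ≤ ∑ ρ : Fin n → Option Bool,
          (∏ i, (ρ i).elim q (fun c => (1 - q) * μ c)) *
          (∑ T ∈ S.powersetCard m, ∏ i ∈ T, (if ρ i ≠ none then (1:ℝ) else 0)) := by
          apply Finset.sum_le_sum
          intro ρ _
          exact mul_le_mul_of_nonneg_left (hpt ρ) (hW0 ρ)
      _ = ∑ T ∈ S.powersetCard m, ∑ ρ : Fin n → Option Bool,
          (∏ i, (ρ i).elim q (fun c => (1 - q) * μ c)) *
          (∏ i ∈ T, (if ρ i ≠ none then (1:ℝ) else 0)) := by
          rw [Finset.sum_comm]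
          apply Finset.sum_congr rfl
          intro ρ _
          rw [Finset.mul_sum]
      _ = ∑ T ∈ S.powersetCard m, r ^ T.card := by
          apply Finset.sum_congr rfl
          intro T _
          exact fixed_mass μ hsum q T
      _ = (s.choose m : ℝ) * r ^ m := by
          rw [Finset.sum_congr rfl (fun T hT => by
            rw [(Finset.mem_powersetCard.mp hT).2]), Finset.sum_const,
            Finset.card_powersetCard, nsmul_eq_mul]
      _ ≤ ζ := by
          have hch : s.choose m = s.choose K₀ := by
            have h1 : m = s - K₀ := hmdef
            have := Nat.choose_symm (show K₀ ≤ s by omega)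
            rw [h1, this]
          have hch2 : (s.choose m : ℝ) ≤ (s:ℝ) ^ K₀ := by
            rw [hch]
            calc (s.choose K₀ : ℝ) ≤ ((s ^ K₀ : ℕ) : ℝ) := by
                  exact_mod_cast Nat.choose_le_pow s K₀
              _ = (s:ℝ) ^ K₀ := by push_cast; ring
          have hmain := hM₀ s hsM₀
          have hpowsplit : r ^ m * r ^ K₀ = r ^ s := by
            rw [← pow_add]
            congr 1
            omega
          have h3 : (s.choose m : ℝ) * r ^ m * r ^ K₀ ≤ ζ * r ^ K₀ := by
            calc (s.choose m : ℝ) * r ^ m * r ^ K₀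
                = (s.choose m : ℝ) * r ^ s := by rw [mul_assoc, hpowsplit]
              _ ≤ (s:ℝ) ^ K₀ * r ^ s :=
                  mul_le_mul_of_nonneg_right hch2 (pow_nonneg hr0.le _)
              _ ≤ ζ * r ^ K₀ := hmain
          have := (mul_le_mul_iff_of_pos_right (pow_pos hr0 K₀)).mp h3
          exact this
  linarith [hstep1, hsplit, hbad]
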